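/- Workspace Lemma: Given a finite relational vocabulary, a structure (A,ā) and q > 0, there is a structure B (finite if A is finite, with |B| ≤ 2q|A|) such that (A + B, ā) ≡_q (A_k + B, ā), where k = 2^q and A_k is the induced substructure on the Gaifman ball of radius k around ā, and ≡_q is elementary equivalence up to quantifier rank q. -/

import Mathlib

/-- A relational structure over vocabulary `R` (arities `ar`) with `m` distinguished
constants (the parameter tuple `ā`). -/
structure Str (R : Type) (ar : R → ℕ) (m : ℕ) where
  W : Type
  rel : ∀ r : R, (Fin (ar r) → W) → Prop
  c : Fin m → W

variable {R : Type} {ar : R → ℕ} {m : ℕ}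

/-- Terms: constants or variables. -/
abbrev Tm (m n : ℕ) : Type := Fin m ⊕ Fin n

/-- Evaluation of terms. -/
def tmEval (A : Str R ar m) {n : ℕ} (v : Fin n → A.W) : Tm m n → A.W :=
  Sum.elim A.c v

/-- Gaifman adjacency: distinct elements co-occurring in a tuple of some relation. -/
def adj (A : Str R ar m) (x y : A.W) : Prop :=
  x ≠ y ∧ ∃ r t, A.rel r t ∧ (∃ i, t i = x) ∧ (∃ j, t j = y)

/-- Gaifman-graph distance is at most `n`. -/
inductive distLE (A : Str R ar m) : A.W → A.W → ℕ → Prop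
  | refl (x : A.W) (n : ℕ) : distLE A x x n
  | step {x y z : A.W} {n : ℕ} : adj A x y → distLE A y z n → distLE A x z (n + 1)

/-- The closed Gaifman ball of radius `k` around the constants. -/
def ballSet (A : Str R ar m) (k : ℕ) : Set A.W :=
  {w | ∃ i : Fin m, distLE A (A.c i) w k}

theorem c_mem_ballSet (A : Str R ar m) (k : ℕ) (i : Fin m) :
    A.c i ∈ ballSet A k := ⟨i, distLE.refl _ _⟩

/-- `Sk(A,ā)`: the induced substructure on the closed Gaifman ball of radius `k`
around the distinguished tuple. -/
def SkStr (A : Str R ar m) (k : ℕ) : Str R ar m where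
  W := {w : A.W // w ∈ ballSet A k}
  rel r t := A.rel r fun i => (t i).1
  c i := ⟨A.c i, c_mem_ballSet A k i⟩

/-- First-order formulas with equality, with `n` free variables. -/
inductive FO (R : Type) (ar : R → ℕ) (m : ℕ) : ℕ → Type
  | rel {n : ℕ} (r : R) (t : Fin (ar r) → Tm m n) : FO R ar m n
  | eq {n : ℕ} (t u : Tm m n) : FO R ar m n
  | not {n : ℕ} (φ : FO R ar m n) : FO R ar m n
  | and {n : ℕ} (φ ψ : FO R ar m n) : FO R ar m n
  | or {n : ℕ} (φ ψ : FO R ar m n) : FO R ar m n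
  | ex {n : ℕ} (φ : FO R ar m (n + 1)) : FO R ar m n
  | all {n : ℕ} (φ : FO R ar m (n + 1)) : FO R ar m n

/-- Tarskian satisfaction. -/
def FO.Sat (A : Str R ar m) : ∀ {n : ℕ}, FO R ar m n → (Fin n → A.W) → Prop
  | _, .rel r t, v => A.rel r fun i => tmEval A v (t i)
  | _, .eq t u, v => tmEval A v t = tmEval A v u
  | _, .not φ, v => ¬ FO.Sat A φ v
  | _, .and φ ψ, v => FO.Sat A φ v ∧ FO.Sat A ψ v
  | _, .or φ ψ, v => FO.Sat A φ v ∨ FO.Sat A ψ v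
  | _, .ex φ, v => ∃ w : A.W, FO.Sat A φ (Fin.snoc v w)
  | _, .all φ, v => ∀ w : A.W, FO.Sat A φ (Fin.snoc v w)

/-- Quantifier rank. -/
def FO.qr : ∀ {n : ℕ}, FO R ar m n → ℕ
  | _, .rel _ _ => 0
  | _, .eq _ _ => 0
  | _, .not φ => φ.qr
  | _, .and φ ψ => max φ.qr ψ.qr
  | _, .or φ ψ => max φ.qr ψ.qr
  | _, .ex φ => φ.qr + 1
  | _, .all φ => φ.qr + 1

/-- Satisfaction of a sentence (a formula whose free variables are the parameters). -/
def FO.SatS (A : Str R ar m) (φ : FO R ar m 0) : Prop :=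
  FO.Sat A φ (fun i => i.elim0)

/-- Disjoint union `A + B` of structures, with the distinguished constants living
in the `A`-component. -/
def sumStr (A : Str R ar m) (B : Str R ar 0) : Str R ar m where
  W := A.W ⊕ B.W
  rel r t :=
    (∃ ta : Fin (ar r) → A.W, (∀ i, t i = Sum.inl (ta i)) ∧ A.rel r ta) ∨
    (∃ tb : Fin (ar r) → B.W, (∀ i, t i = Sum.inr (tb i)) ∧ B.rel r tb)
  c i := Sum.inl (A.c i)



namespace Workspace

open Classical

theorem distLE_mono {A : Str R ar m} {x y : A.W} {n n' : ℕ}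
    (h : distLE A x y n) (hn : n ≤ n') : distLE A x y n' := by
  induction h generalizing n' with
  | refl w k => exact .refl _ _
  | @step x y z k ha hd ih =>
      cases n' with
      | zero => omega
      | succ n'' => exact .step ha (ih (by omega))

theorem distLE_trans {A : Str R ar m} {x y z : A.W} {a b : ℕ}
    (h1 : distLE A x y a) (h2 : distLE A y z b) : distLE A x z (a + b) := by
  induction h1 with
  | refl w k => exact distLE_mono h2 (by omega)
  | step ha _ ih => exact distLE_mono (.step ha (ih h2)) (by omega)

theorem adj_symm {A : Str R ar m} {x y : A.W} (h : adj A x y) : adj A y x := by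
  obtain ⟨hne, r, t, hrel, hi, hj⟩ := h
  exact ⟨hne.symm, r, t, hrel, hj, hi⟩

theorem distLE_snoc {A : Str R ar m} {x y z : A.W} {n : ℕ}
    (h : distLE A x y n) (ha : adj A y z) : distLE A x z (n + 1) := by
  induction h with
  | refl w k => exact distLE_mono (.step ha (.refl _ 0)) (by omega)
  | step ha' _ ih => exact .step ha' (ih ha)

theorem distLE_symm {A : Str R ar m} {x y : A.W} {n : ℕ}
    (h : distLE A x y n) : distLE A y x n := by
  induction h with
  | refl w k => exact .refl _ _
  | step ha _ ih => exact distLE_snoc ih (adj_symm ha)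

theorem distLE_one_of_rel {A : Str R ar m} {r : R} {t : Fin (ar r) → A.W}
    (h : A.rel r t) (i j : Fin (ar r)) : distLE A (t i) (t j) 1 := by
  by_cases he : t i = t j
  · rw [he]; exact .refl _ _
  · exact .step ⟨he, r, t, h, ⟨i, rfl⟩, ⟨j, rfl⟩⟩ (.refl _ 0)

/-- Embedding of terms into a context with one more variable. -/
def embTm (m n : ℕ) : Tm m n → Tm m (n + 1) := Sum.map id Fin.castSucc

theorem tmEval_snoc_emb (M : Str R ar m) {n : ℕ} (v : Fin n → M.W) (x : M.W)
    (p : Tm m n) : tmEval M (Fin.snoc v x) (embTm m n p) = tmEval M v p := by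
  cases p with
  | inl i => rfl
  | inr i => simp [tmEval, embTm]

theorem tmEval_snoc_last (M : Str R ar m) {n : ℕ} (v : Fin n → M.W) (x : M.W) :
    tmEval M (Fin.snoc v x) (.inr (Fin.last n)) = x := by
  simp [tmEval]

theorem tm_cases {n : ℕ} (p : Tm m (n + 1)) :
    (∃ p' : Tm m n, p = embTm m n p') ∨ p = .inr (Fin.last n) := by
  cases p with
  | inl i => exact .inl ⟨.inl i, rfl⟩
  | inr i =>
      rcases Fin.eq_castSucc_or_eq_last i with ⟨j, rfl⟩ | rfl
      · exact .inl ⟨.inr j, rfl⟩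
      · exact .inr rfl

/-- Generic Ehrenfeucht–Fraïssé style transfer lemma from a back-and-forth system. -/
theorem ef_transfer {M N : Str R ar m}
    (I : ∀ n : ℕ, ℕ → (Fin n → M.W) → (Fin n → N.W) → Prop)
    (hatomEq : ∀ n j v w, I n j v w → ∀ t u : Tm m n,
      (tmEval M v t = tmEval M v u ↔ tmEval N w t = tmEval N w u))
    (hatomRel : ∀ n j v w, I n j v w → ∀ (r : R) (t : Fin (ar r) → Tm m n),
      (M.rel r (fun i => tmEval M v (t i)) ↔ N.rel r (fun i => tmEval N w (t i))))
    (hforth : ∀ n j v w, I n (j + 1) v w → ∀ x : M.W, ∃ y : N.W,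
      I (n + 1) j (Fin.snoc v x) (Fin.snoc w y))
    (hback : ∀ n j v w, I n (j + 1) v w → ∀ y : N.W, ∃ x : M.W,
      I (n + 1) j (Fin.snoc v x) (Fin.snoc w y)) :
    ∀ {n : ℕ} (φ : FO R ar m n) (j : ℕ) (v : Fin n → M.W) (w : Fin n → N.W),
      φ.qr ≤ j → I n j v w → (FO.Sat M φ v ↔ FO.Sat N φ w) := by
  intro n φ
  induction φ with
  | rel r t => intro j v w _ hI; exact hatomRel _ j v w hI r t
  | eq t u => intro j v w _ hI; exact hatomEq _ j v w hI t u
  | not φ ih => intro j v w hq hI; exact not_congr (ih j v w hq hI)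
  | and φ ψ ih1 ih2 =>
      intro j v w hq hI
      simp only [FO.qr, max_le_iff] at hq
      exact and_congr (ih1 j v w hq.1 hI) (ih2 j v w hq.2 hI)
  | or φ ψ ih1 ih2 =>
      intro j v w hq hI
      simp only [FO.qr, max_le_iff] at hq
      exact or_congr (ih1 j v w hq.1 hI) (ih2 j v w hq.2 hI)
  | ex φ ih =>
      intro j v w hq hI
      simp only [FO.qr] at hq
      cases j with
      | zero => omega
      | succ j' =>
        constructor
        · rintro ⟨x, hx⟩
          obtain ⟨y, hy⟩ := hforth _ _ _ _ hI x
          exact ⟨y, (ih j' _ _ (by omega) hy).mp hx⟩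
        · rintro ⟨y, hy⟩
          obtain ⟨x, hx⟩ := hback _ _ _ _ hI y
          exact ⟨x, (ih j' _ _ (by omega) hx).mpr hy⟩
  | all φ ih =>
      intro j v w hq hI
      simp only [FO.qr] at hq
      cases j with
      | zero => omega
      | succ j' =>
        constructor
        · intro hall y
          obtain ⟨x, hx⟩ := hback _ _ _ _ hI y
          exact (ih j' _ _ (by omega) hx).mp (hall x)
        · intro hall x
          obtain ⟨y, hy⟩ := hforth _ _ _ _ hI x
          exact (ih j' _ _ (by omega) hy).mpr (hall y)

end Workspace
namespace Workspace

variable (A : Str R ar m) (q : ℕ)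

/-- The workspace: `q` copies of `A` and `q` copies of the ball structure. -/
def Bstr : Str R ar 0 where
  W := (Fin q × A.W) ⊕ (Fin q × (SkStr A (2 ^ q)).W)
  rel r t :=
    (∃ (s : Fin q) (ta : Fin (ar r) → A.W),
        (∀ i, t i = .inl (s, ta i)) ∧ A.rel r ta) ∨
    (∃ (s : Fin q) (tk : Fin (ar r) → (SkStr A (2 ^ q)).W),
        (∀ i, t i = .inr (s, tk i)) ∧ (SkStr A (2 ^ q)).rel r tk)
  c i := i.elim0

abbrev Mstr : Str R ar m := sumStr A (Bstr A q)
abbrev Nstr : Str R ar m := sumStr (SkStr A (2 ^ q)) (Bstr A q)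

/-- Component indices of `Mstr`/`Nstr`. -/
inductive CIdx (q : ℕ) : Type
  | main : CIdx q
  | cA (s : Fin q) : CIdx q
  | cK (s : Fin q) : CIdx q
deriving DecidableEq

/-- Kinds: `false` = full copy of `A`, `true` = copy of the ball. -/
def kindM : CIdx q → Bool
  | .main => false
  | .cA _ => false
  | .cK _ => true

def kindN : CIdx q → Bool
  | .main => true
  | .cA _ => false
  | .cK _ => true

def compM : (Mstr A q).W → CIdx q
  | .inl _ => .main
  | .inr (.inl (s, _)) => .cA s
  | .inr (.inr (s, _)) => .cK s

def compN : (Nstr A q).W → CIdx q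
  | .inl _ => .main
  | .inr (.inl (s, _)) => .cA s
  | .inr (.inr (s, _)) => .cK s

def projM : (Mstr A q).W → A.W
  | .inl a => a
  | .inr (.inl (_, a)) => a
  | .inr (.inr (_, k)) => k.1

def projN : (Nstr A q).W → A.W
  | .inl k => k.1
  | .inr (.inl (_, a)) => a
  | .inr (.inr (_, k)) => k.1

variable {A q}

theorem compM_main {x : (Mstr A q).W} (h : compM A q x = .main) :
    x = .inl (projM A q x) := by
  rcases x with a | (⟨s, a⟩ | ⟨s, k⟩) <;> simp [compM, projM] at h ⊢ <;> rfl

theorem compM_cA {x : (Mstr A q).W} {s : Fin q} (h : compM A q x = .cA s) :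
    x = .inr (.inl (s, projM A q x)) := by
  rcases x with a | (⟨s', a⟩ | ⟨s', k⟩) <;> simp_all [compM, projM] <;> rfl

theorem compM_cK {x : (Mstr A q).W} {s : Fin q} (h : compM A q x = .cK s) :
    ∃ k, x = .inr (.inr (s, k)) ∧ k.1 = projM A q x := by
  rcases x with a | (⟨s', a⟩ | ⟨s', k⟩) <;> simp_all [compM, projM]
  exact ⟨k, rfl, rfl⟩

theorem compN_main {y : (Nstr A q).W} (h : compN A q y = .main) :
    ∃ k, y = .inl k ∧ k.1 = projN A q y := by
  rcases y with k | (⟨s', a⟩ | ⟨s', k⟩) <;> simp_all [compN, projN]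
  exact ⟨k, rfl, rfl⟩

theorem compN_cA {y : (Nstr A q).W} {s : Fin q} (h : compN A q y = .cA s) :
    y = .inr (.inl (s, projN A q y)) := by
  rcases y with k | (⟨s', a⟩ | ⟨s', k⟩) <;> simp_all [compN, projN] <;> rfl

theorem compN_cK {y : (Nstr A q).W} {s : Fin q} (h : compN A q y = .cK s) :
    ∃ k, y = .inr (.inr (s, k)) ∧ k.1 = projN A q y := by
  rcases y with k | (⟨s', a⟩ | ⟨s', k⟩) <;> simp_all [compN, projN]
  exact ⟨k, rfl, rfl⟩

theorem ball_of_compM_cK {x : (Mstr A q).W} {s : Fin q} (h : compM A q x = .cK s) :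
    projM A q x ∈ ballSet A (2 ^ q) := by
  obtain ⟨k, _, hk⟩ := compM_cK h
  exact hk ▸ k.2

theorem ball_of_kindN {y : (Nstr A q).W} (h : kindN q (compN A q y) = true) :
    projN A q y ∈ ballSet A (2 ^ q) := by
  rcases y with k | (⟨s', a⟩ | ⟨s', k⟩)
  · exact k.2
  · simp [compN, kindN] at h
  · exact k.2

theorem kindM_true_iff {c : CIdx q} : kindM q c = true ↔ ∃ s, c = .cK s := by
  cases c <;> simp [kindM]

theorem kindN_false_iff {c : CIdx q} : kindN q c = false ↔ ∃ s, c = .cA s := by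
  cases c <;> simp [kindN]

/-- Equality in `Mstr` is component + projection equality. -/
theorem eqM_iff {x y : (Mstr A q).W} :
    x = y ↔ (compM A q x = compM A q y ∧ projM A q x = projM A q y) := by
  rcases x with a | (⟨s, a⟩ | ⟨s, k⟩) <;> rcases y with b | (⟨t, b⟩ | ⟨t, l⟩) <;>
    simp [compM, projM, Subtype.ext_iff, SkStr, Bstr, sumStr, Sum.inl.injEq, Sum.inr.injEq,
      Prod.mk.injEq, and_comm]
  case inl.inl => exact ⟨fun h => by cases h; rfl, fun h => by subst h; rfl⟩
  case inr.inl.inr.inl => exact ⟨fun h => by cases h; exact ⟨rfl, rfl⟩, fun ⟨h1, h2⟩ => by subst h1 h2; rfl⟩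
  case inr.inl.inr.inr => intro h; cases h
  case inr.inr.inr.inl => intro h; cases h
  case inr.inr.inr.inr =>
    exact ⟨fun h => by cases h; exact ⟨rfl, rfl⟩, fun ⟨h1, h2⟩ => by subst h2; obtain rfl := Subtype.ext h1; rfl⟩

theorem eqN_iff {x y : (Nstr A q).W} :
    x = y ↔ (compN A q x = compN A q y ∧ projN A q x = projN A q y) := by
  rcases x with a | (⟨s, a⟩ | ⟨s, k⟩) <;> rcases y with b | (⟨t, b⟩ | ⟨t, l⟩) <;>
    simp [compN, projN, Subtype.ext_iff, SkStr, Bstr, sumStr, Sum.inl.injEq, Sum.inr.injEq,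
      Prod.mk.injEq, and_comm]
  case inl.inl => exact ⟨fun h => by cases h; rfl, fun h => by obtain rfl := Subtype.ext h; rfl⟩
  case inr.inl.inr.inl => exact ⟨fun h => by cases h; exact ⟨rfl, rfl⟩, fun ⟨h1, h2⟩ => by subst h1 h2; rfl⟩
  case inr.inl.inr.inr => intro h; cases h
  case inr.inr.inr.inl => intro h; cases h
  case inr.inr.inr.inr =>
    exact ⟨fun h => by cases h; exact ⟨rfl, rfl⟩, fun ⟨h1, h2⟩ => by subst h2; obtain rfl := Subtype.ext h1; rfl⟩

/-- Normal form for relations of `Mstr`. -/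
theorem relM_iff {r : R} {t : Fin (ar r) → (Mstr A q).W} :
    (Mstr A q).rel r t ↔
      ∃ c : CIdx q, (∀ i, compM A q (t i) = c) ∧ A.rel r (fun i => projM A q (t i)) := by
  constructor
  · rintro (⟨ta, hta, hrel⟩ | ⟨tb, htb, hrel⟩)
    · refine ⟨.main, fun i => by rw [hta i]; rfl, ?_⟩
      have hfun : (fun i => projM A q (t i)) = ta := funext fun i => by rw [hta i]; rfl
      rw [hfun]; exact hrel
    · rcases hrel with ⟨s, ta, hta, hrel⟩ | ⟨s, tk, htk, hrel⟩
      · refine ⟨.cA s, fun i => by rw [htb i, hta i]; rfl, ?_⟩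
        have hfun : (fun i => projM A q (t i)) = ta := funext fun i => by
          rw [htb i, hta i]; rfl
        rw [hfun]; exact hrel
      · refine ⟨.cK s, fun i => by rw [htb i, htk i]; rfl, ?_⟩
        have hfun : (fun i => projM A q (t i)) = fun i => (tk i).1 := funext fun i => by
          rw [htb i, htk i]; rfl
        rw [hfun]; exact hrel
  · rintro ⟨c, hc, hrel⟩
    cases c with
    | main =>
        exact .inl ⟨fun i => projM A q (t i), fun i => compM_main (hc i), hrel⟩
    | cA s =>
        refine .inr ⟨fun i => .inl (s, projM A q (t i)), fun i => compM_cA (hc i), ?_⟩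
        exact .inl ⟨s, fun i => projM A q (t i), fun i => rfl, hrel⟩
    | cK s =>
        choose k hk hk2 using fun i => compM_cK (hc i)
        refine .inr ⟨fun i => .inr (s, k i), fun i => hk i, ?_⟩
        refine .inr ⟨s, k, fun i => rfl, ?_⟩
        show A.rel r fun i => (k i).1
        have hfun : (fun i => (k i).1) = fun i => projM A q (t i) := funext fun i => hk2 i
        rw [hfun]; exact hrel

/-- Normal form for relations of `Nstr`. -/
theorem relN_iff {r : R} {t : Fin (ar r) → (Nstr A q).W} :
    (Nstr A q).rel r t ↔
      ∃ c : CIdx q, (∀ i, compN A q (t i) = c) ∧ A.rel r (fun i => projN A q (t i)) := by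
  constructor
  · rintro (⟨ta, hta, hrel⟩ | ⟨tb, htb, hrel⟩)
    · refine ⟨.main, fun i => by rw [hta i]; rfl, ?_⟩
      have hfun : (fun i => projN A q (t i)) = fun i => (ta i).1 := funext fun i => by
        rw [hta i]; rfl
      rw [hfun]; exact hrel
    · rcases hrel with ⟨s, ta, hta, hrel⟩ | ⟨s, tk, htk, hrel⟩
      · refine ⟨.cA s, fun i => by rw [htb i, hta i]; rfl, ?_⟩
        have hfun : (fun i => projN A q (t i)) = ta := funext fun i => by
          rw [htb i, hta i]; rfl
        rw [hfun]; exact hrel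
      · refine ⟨.cK s, fun i => by rw [htb i, htk i]; rfl, ?_⟩
        have hfun : (fun i => projN A q (t i)) = fun i => (tk i).1 := funext fun i => by
          rw [htb i, htk i]; rfl
        rw [hfun]; exact hrel
  · rintro ⟨c, hc, hrel⟩
    cases c with
    | main =>
        choose k hk hk2 using fun i => compN_main (hc i)
        refine .inl ⟨k, hk, ?_⟩
        show A.rel r fun i => (k i).1
        have hfun : (fun i => (k i).1) = fun i => projN A q (t i) := funext fun i => hk2 i
        rw [hfun]; exact hrel
    | cA s =>
        refine .inr ⟨fun i => .inl (s, projN A q (t i)), fun i => compN_cA (hc i), ?_⟩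
        exact .inl ⟨s, fun i => projN A q (t i), fun i => rfl, hrel⟩
    | cK s =>
        choose k hk hk2 using fun i => compN_cK (hc i)
        refine .inr ⟨fun i => .inr (s, k i), fun i => hk i, ?_⟩
        refine .inr ⟨s, k, fun i => rfl, ?_⟩
        show A.rel r fun i => (k i).1
        have hfun : (fun i => (k i).1) = fun i => projN A q (t i) := funext fun i => hk2 i
        rw [hfun]; exact hrel

end Workspace
namespace Workspace

variable (A : Str R ar m) (q : ℕ)

/-- The back-and-forth invariant with `j` rounds remaining. -/
def Inv (n j : ℕ) (v : Fin n → (Mstr A q).W) (w : Fin n → (Nstr A q).W) : Prop :=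
  n + j ≤ q ∧
  (∀ p : Tm m n, projM A q (tmEval (Mstr A q) v p) = projN A q (tmEval (Nstr A q) w p)) ∧
  (∀ p p' : Tm m n,
    distLE A (projM A q (tmEval (Mstr A q) v p)) (projM A q (tmEval (Mstr A q) v p')) (2 ^ j) →
    (compM A q (tmEval (Mstr A q) v p) = compM A q (tmEval (Mstr A q) v p') ↔
      compN A q (tmEval (Nstr A q) w p) = compN A q (tmEval (Nstr A q) w p'))) ∧
  (∀ p : Tm m n,
    kindM q (compM A q (tmEval (Mstr A q) v p)) = kindN q (compN A q (tmEval (Nstr A q) w p)) ∨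
    (compM A q (tmEval (Mstr A q) v p) = .main ∧ compN A q (tmEval (Nstr A q) w p) = .main)) ∧
  (∀ p : Tm m n, compM A q (tmEval (Mstr A q) v p) = .main →
    compN A q (tmEval (Nstr A q) w p) = .main →
    ∃ i, distLE A (A.c i) (projM A q (tmEval (Mstr A q) v p)) (2 ^ q - 2 ^ j))

variable {A q}

theorem Inv_atomEq {n j : ℕ} {v : Fin n → (Mstr A q).W} {w : Fin n → (Nstr A q).W}
    (hI : Inv A q n j v w) (t u : Tm m n) :
    tmEval (Mstr A q) v t = tmEval (Mstr A q) v u ↔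
      tmEval (Nstr A q) w t = tmEval (Nstr A q) w u := by
  obtain ⟨-, h0, h1, -, -⟩ := hI
  rw [eqM_iff, eqN_iff, ← h0 t, ← h0 u]
  constructor
  · rintro ⟨hc, hp⟩
    exact ⟨(h1 t u (by rw [hp]; exact .refl _ _)).mp hc, hp⟩
  · rintro ⟨hc, hp⟩
    exact ⟨(h1 t u (by rw [hp]; exact .refl _ _)).mpr hc, hp⟩

theorem Inv_atomRel {n j : ℕ} {v : Fin n → (Mstr A q).W} {w : Fin n → (Nstr A q).W}
    (hI : Inv A q n j v w) (r : R) (t : Fin (ar r) → Tm m n) :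
    ((Mstr A q).rel r fun i => tmEval (Mstr A q) v (t i)) ↔
      ((Nstr A q).rel r fun i => tmEval (Nstr A q) w (t i)) := by
  obtain ⟨-, h0, h1, -, -⟩ := hI
  rw [relM_iff, relN_iff]
  have hproj : (fun i => projN A q (tmEval (Nstr A q) w (t i))) =
      fun i => projM A q (tmEval (Mstr A q) v (t i)) := funext fun i => (h0 (t i)).symm
  constructor
  · rintro ⟨c, hc, hrel⟩
    rcases isEmpty_or_nonempty (Fin (ar r)) with he | ⟨⟨i0⟩⟩
    · exact ⟨.main, fun i => (he.false i).elim, by rw [hproj]; exact hrel⟩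
    · refine ⟨compN A q (tmEval (Nstr A q) w (t i0)), fun i => ?_, by rw [hproj]; exact hrel⟩
      have hd := distLE_mono (distLE_one_of_rel hrel i i0) (Nat.one_le_pow j 2 (by norm_num))
      exact (h1 (t i) (t i0) hd).mp (by rw [hc i, hc i0])
  · rintro ⟨c, hc, hrel⟩
    rw [hproj] at hrel
    rcases isEmpty_or_nonempty (Fin (ar r)) with he | ⟨⟨i0⟩⟩
    · exact ⟨.main, fun i => (he.false i).elim, hrel⟩
    · refine ⟨compM A q (tmEval (Mstr A q) v (t i0)), fun i => ?_, hrel⟩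
      have hd := distLE_mono (distLE_one_of_rel hrel i i0) (Nat.one_le_pow j 2 (by norm_num))
      exact (h1 (t i) (t i0) hd).mpr (by rw [hc i, hc i0])

theorem Inv_extend_near {n j : ℕ} {v : Fin n → (Mstr A q).W} {w : Fin n → (Nstr A q).W}
    {x : (Mstr A q).W} {y : (Nstr A q).W} {p : Tm m n}
    (hI : Inv A q n (j + 1) v w)
    (hc : compM A q (tmEval (Mstr A q) v p) = compM A q x)
    (hd : distLE A (projM A q (tmEval (Mstr A q) v p)) (projM A q x) (2 ^ j))
    (hyc : compN A q y = compN A q (tmEval (Nstr A q) w p))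
    (hyp : projN A q y = projM A q x) :
    Inv A q (n + 1) j (Fin.snoc v x) (Fin.snoc w y) := by
  obtain ⟨h4, h0, h1, h3, h2⟩ := hI
  have hpow : 2 ^ (j + 1) = 2 ^ j + 2 ^ j := by rw [pow_succ]; ring
  have hjq : 2 ^ (j + 1) ≤ 2 ^ q := Nat.pow_le_pow_right (by norm_num) (by omega)
  refine ⟨by omega, ?_, ?_, ?_, ?_⟩
  · intro p0
    rcases tm_cases p0 with ⟨p', rfl⟩ | rfl
    · rw [tmEval_snoc_emb, tmEval_snoc_emb]; exact h0 p'
    · rw [tmEval_snoc_last, tmEval_snoc_last]; exact hyp.symm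
  · intro p0 p1 hdist
    rcases tm_cases p0 with ⟨p0', rfl⟩ | rfl <;> rcases tm_cases p1 with ⟨p1', rfl⟩ | rfl <;>
      simp only [tmEval_snoc_emb, tmEval_snoc_last] at hdist ⊢
    · exact h1 p0' p1' (distLE_mono hdist (Nat.pow_le_pow_right (by norm_num) (Nat.le_succ j)))
    · have hdd : distLE A (projM A q (tmEval (Mstr A q) v p0'))
          (projM A q (tmEval (Mstr A q) v p)) (2 ^ (j + 1)) :=
        distLE_mono (distLE_trans hdist (distLE_symm hd)) (le_of_eq hpow.symm)
      rw [← hc, hyc]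
      exact h1 p0' p hdd
    · have hdd : distLE A (projM A q (tmEval (Mstr A q) v p))
          (projM A q (tmEval (Mstr A q) v p1')) (2 ^ (j + 1)) :=
        distLE_mono (distLE_trans hd hdist) (le_of_eq hpow.symm)
      rw [← hc, hyc]
      exact h1 p p1' hdd
  · intro p0
    rcases tm_cases p0 with ⟨p', rfl⟩ | rfl <;>
      simp only [tmEval_snoc_emb, tmEval_snoc_last]
    · exact h3 p'
    · rw [← hc, hyc]; exact h3 p
  · intro p0
    rcases tm_cases p0 with ⟨p', rfl⟩ | rfl <;>
      simp only [tmEval_snoc_emb, tmEval_snoc_last]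
    · intro hm hn
      obtain ⟨i, hi⟩ := h2 p' hm hn
      exact ⟨i, distLE_mono hi (Nat.sub_le_sub_left (Nat.pow_le_pow_right (by norm_num) (Nat.le_succ j)) _)⟩
    · intro hm hn
      rw [← hc] at hm; rw [hyc] at hn
      obtain ⟨i, hi⟩ := h2 p hm hn
      exact ⟨i, distLE_mono (distLE_trans hi hd) (by omega)⟩

theorem Inv_extend_far {n j : ℕ} {v : Fin n → (Mstr A q).W} {w : Fin n → (Nstr A q).W}
    {x : (Mstr A q).W} {y : (Nstr A q).W}
    (hI : Inv A q n (j + 1) v w)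
    (hfar : ∀ p : Tm m n,
      distLE A (projM A q (tmEval (Mstr A q) v p)) (projM A q x) (2 ^ j) →
      compM A q (tmEval (Mstr A q) v p) ≠ compM A q x ∧
        compN A q (tmEval (Nstr A q) w p) ≠ compN A q y)
    (hk : kindM q (compM A q x) = kindN q (compN A q y))
    (hnm : compM A q x ≠ .main ∨ compN A q y ≠ .main)
    (hyp : projN A q y = projM A q x) :
    Inv A q (n + 1) j (Fin.snoc v x) (Fin.snoc w y) := by
  obtain ⟨h4, h0, h1, h3, h2⟩ := hI
  have hpow : 2 ^ (j + 1) = 2 ^ j + 2 ^ j := by rw [pow_succ]; ring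
  refine ⟨by omega, ?_, ?_, ?_, ?_⟩
  · intro p0
    rcases tm_cases p0 with ⟨p', rfl⟩ | rfl
    · rw [tmEval_snoc_emb, tmEval_snoc_emb]; exact h0 p'
    · rw [tmEval_snoc_last, tmEval_snoc_last]; exact hyp.symm
  · intro p0 p1 hdist
    rcases tm_cases p0 with ⟨p0', rfl⟩ | rfl <;> rcases tm_cases p1 with ⟨p1', rfl⟩ | rfl <;>
      simp only [tmEval_snoc_emb, tmEval_snoc_last] at hdist ⊢
    · exact h1 p0' p1' (distLE_mono hdist (Nat.pow_le_pow_right (by norm_num) (Nat.le_succ j)))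
    · exact iff_of_false (hfar p0' hdist).1 (hfar p0' hdist).2
    · have := hfar p1' (distLE_symm hdist)
      exact iff_of_false (fun h => this.1 h.symm) (fun h => this.2 h.symm)
  · intro p0
    rcases tm_cases p0 with ⟨p', rfl⟩ | rfl <;>
      simp only [tmEval_snoc_emb, tmEval_snoc_last]
    · exact h3 p'
    · exact .inl hk
  · intro p0
    rcases tm_cases p0 with ⟨p', rfl⟩ | rfl <;>
      simp only [tmEval_snoc_emb, tmEval_snoc_last]
    · intro hm hn
      obtain ⟨i, hi⟩ := h2 p' hm hn
      exact ⟨i, distLE_mono hi (Nat.sub_le_sub_left (Nat.pow_le_pow_right (by norm_num) (Nat.le_succ j)) _)⟩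
    · intro hm hn
      rcases hnm with h | h
      · exact absurd hm h
      · exact absurd hn h

theorem exists_fresh {k n : ℕ} (hn : n < k) {β : Type} (e : Fin k → β)
    (he : Function.Injective e) (g : Fin n → β) : ∃ s, ∀ i, g i ≠ e s := by
  by_contra hcon
  push_neg at hcon
  choose f hf using hcon
  have hinj : Function.Injective f := fun s s' hss => he (by rw [← hf s, ← hf s', hss])
  have := Fintype.card_le_of_injective f hinj
  simp only [Fintype.card_fin] at this
  omega

theorem compM_const (i : Fin m) (n : ℕ) (v : Fin n → (Mstr A q).W) :
    compM A q (tmEval (Mstr A q) v (.inl i)) = .main := rfl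

theorem compN_const (i : Fin m) (n : ℕ) (w : Fin n → (Nstr A q).W) :
    compN A q (tmEval (Nstr A q) w (.inl i)) = .main := rfl

end Workspace
namespace Workspace

variable {A : Str R ar m} {q : ℕ}

theorem cA_inj : Function.Injective (CIdx.cA (q := q)) := fun a b h => by injection h

theorem cK_inj : Function.Injective (CIdx.cK (q := q)) := fun a b h => by injection h

theorem Inv_forth {n j : ℕ} {v : Fin n → (Mstr A q).W} {w : Fin n → (Nstr A q).W}
    (hI : Inv A q n (j + 1) v w) (x : (Mstr A q).W) :
    ∃ y, Inv A q (n + 1) j (Fin.snoc v x) (Fin.snoc w y) := by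
  have hpow : 2 ^ (j + 1) = 2 ^ j + 2 ^ j := by rw [pow_succ]; ring
  have hjq : 2 ^ (j + 1) ≤ 2 ^ q := Nat.pow_le_pow_right (by norm_num) (by have := hI.1; omega)
  by_cases hnear : ∃ p : Tm m n, compM A q (tmEval (Mstr A q) v p) = compM A q x ∧
      distLE A (projM A q (tmEval (Mstr A q) v p)) (projM A q x) (2 ^ j)
  · obtain ⟨p, hc, hd⟩ := hnear
    rcases hcn : compN A q (tmEval (Nstr A q) w p) with _ | s | s
    · -- response in the main component of `Nstr`
      have hball : projM A q x ∈ ballSet A (2 ^ q) := by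
        rcases hI.2.2.2.1 p with hkind | ⟨hm, hn⟩
        · rw [hcn] at hkind
          have hx : kindM q (compM A q x) = true := by rw [← hc, hkind]; rfl
          obtain ⟨s', hs'⟩ := kindM_true_iff.mp hx
          exact ball_of_compM_cK hs'
        · obtain ⟨i, hi⟩ := hI.2.2.2.2 p hm hn
          refine ⟨i, distLE_mono (distLE_trans hi hd) ?_⟩
          have hcan := Nat.sub_add_cancel hjq
          have h2 : 2 ^ j ≤ 2 ^ (j + 1) := Nat.pow_le_pow_right (by norm_num) (Nat.le_succ j)
          omega
      exact ⟨.inl ⟨projM A q x, hball⟩,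
        Inv_extend_near hI hc hd (by rw [hcn]; rfl) rfl⟩
    · exact ⟨.inr (.inl (s, projM A q x)),
        Inv_extend_near hI hc hd (by rw [hcn]; rfl) rfl⟩
    · have hball : projM A q x ∈ ballSet A (2 ^ q) := by
        rcases hI.2.2.2.1 p with hkind | ⟨hm, hn⟩
        · rw [hcn] at hkind
          have hx : kindM q (compM A q x) = true := by rw [← hc, hkind]; rfl
          obtain ⟨s', hs'⟩ := kindM_true_iff.mp hx
          exact ball_of_compM_cK hs'
        · exact nomatch (hn.symm.trans hcn)
      exact ⟨.inr (.inr (s, ⟨projM A q x, hball⟩)),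
        Inv_extend_near hI hc hd (by rw [hcn]; rfl) rfl⟩
  · push_neg at hnear
    have hnq : n < q := by have := hI.1; omega
    cases hbx : kindM q (compM A q x) with
    | false =>
      obtain ⟨s0, hs0⟩ := exists_fresh hnq CIdx.cA cA_inj
        (fun i => compN A q (tmEval (Nstr A q) w (.inr i)))
      refine ⟨.inr (.inl (s0, projM A q x)), Inv_extend_far hI ?_ ?_ ?_ rfl⟩
      · intro p hdist
        refine ⟨fun hcomp => absurd hdist (hnear p hcomp), ?_⟩
        show compN A q (tmEval (Nstr A q) w p) ≠ .cA s0
        cases p with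
        | inl i => rw [compN_const]; simp
        | inr i => exact hs0 i
      · rw [hbx]; rfl
      · right; simp [compN]
    | true =>
      obtain ⟨s', hs'⟩ := kindM_true_iff.mp hbx
      have hball := ball_of_compM_cK hs'
      obtain ⟨s0, hs0⟩ := exists_fresh hnq CIdx.cK cK_inj
        (fun i => compN A q (tmEval (Nstr A q) w (.inr i)))
      refine ⟨.inr (.inr (s0, ⟨projM A q x, hball⟩)), Inv_extend_far hI ?_ ?_ ?_ rfl⟩
      · intro p hdist
        refine ⟨fun hcomp => absurd hdist (hnear p hcomp), ?_⟩
        show compN A q (tmEval (Nstr A q) w p) ≠ .cK s0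
        cases p with
        | inl i => rw [compN_const]; simp
        | inr i => exact hs0 i
      · rw [hbx]; rfl
      · right; simp [compN]

theorem Inv_back {n j : ℕ} {v : Fin n → (Mstr A q).W} {w : Fin n → (Nstr A q).W}
    (hI : Inv A q n (j + 1) v w) (y : (Nstr A q).W) :
    ∃ x, Inv A q (n + 1) j (Fin.snoc v x) (Fin.snoc w y) := by
  by_cases hnear : ∃ p : Tm m n, compN A q (tmEval (Nstr A q) w p) = compN A q y ∧
      distLE A (projN A q (tmEval (Nstr A q) w p)) (projN A q y) (2 ^ j)
  · obtain ⟨p, hc, hd⟩ := hnear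
    have hd' : distLE A (projM A q (tmEval (Mstr A q) v p)) (projN A q y) (2 ^ j) := by
      rw [hI.2.1 p]; exact hd
    rcases hcm : compM A q (tmEval (Mstr A q) v p) with _ | s | s
    · exact ⟨.inl (projN A q y),
        Inv_extend_near hI (by rw [hcm]; rfl) hd' hc.symm rfl⟩
    · exact ⟨.inr (.inl (s, projN A q y)),
        Inv_extend_near hI (by rw [hcm]; rfl) hd' hc.symm rfl⟩
    · have hball : projN A q y ∈ ballSet A (2 ^ q) := by
        rcases hI.2.2.2.1 p with hkind | ⟨hm, hn⟩
        · rw [hcm] at hkind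
          apply ball_of_kindN
          rw [← hc, ← hkind]; rfl
        · exact nomatch (hm.symm.trans hcm)
      exact ⟨.inr (.inr (s, ⟨projN A q y, hball⟩)),
        Inv_extend_near hI (by rw [hcm]; rfl) hd' hc.symm rfl⟩
  · push_neg at hnear
    have hnq : n < q := by have := hI.1; omega
    cases hby : kindN q (compN A q y) with
    | false =>
      obtain ⟨s0, hs0⟩ := exists_fresh hnq CIdx.cA cA_inj
        (fun i => compM A q (tmEval (Mstr A q) v (.inr i)))
      refine ⟨.inr (.inl (s0, projN A q y)), Inv_extend_far hI ?_ ?_ ?_ rfl⟩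
      · intro p hdist
        constructor
        · show compM A q (tmEval (Mstr A q) v p) ≠ .cA s0
          cases p with
          | inl i => rw [compM_const]; simp
          | inr i => exact hs0 i
        · intro hcomp
          refine absurd ?_ (hnear p hcomp)
          rw [← hI.2.1 p]
          exact hdist
      · rw [hby]; rfl
      · left; simp [compM]
    | true =>
      have hball := ball_of_kindN hby
      obtain ⟨s0, hs0⟩ := exists_fresh hnq CIdx.cK cK_inj
        (fun i => compM A q (tmEval (Mstr A q) v (.inr i)))
      refine ⟨.inr (.inr (s0, ⟨projN A q y, hball⟩)), Inv_extend_far hI ?_ ?_ ?_ rfl⟩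
      · intro p hdist
        constructor
        · show compM A q (tmEval (Mstr A q) v p) ≠ .cK s0
          cases p with
          | inl i => rw [compM_const]; simp
          | inr i => exact hs0 i
        · intro hcomp
          refine absurd ?_ (hnear p hcomp)
          rw [← hI.2.1 p]
          exact hdist
      · rw [hby]; rfl
      · left; simp [compM]

end Workspace
namespace Workspace

variable {A : Str R ar m} {q : ℕ}

theorem Inv_init (hq : 0 < q) :
    Inv A q 0 q (fun i => i.elim0) (fun i => i.elim0) := by
  refine ⟨by omega, ?_, ?_, ?_, ?_⟩
  · rintro (i | i)
    · rfl
    · exact i.elim0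
  · rintro (i | i) (i' | i') _
    · exact iff_of_true rfl rfl
    · exact i'.elim0
    · exact i.elim0
    · exact i.elim0
  · rintro (i | i)
    · exact .inr ⟨rfl, rfl⟩
    · exact i.elim0
  · rintro (i | i)
    · intro _ _
      refine ⟨i, ?_⟩
      have hz : 2 ^ q - 2 ^ q = 0 := by omega
      rw [hz]
      exact .refl _ _
    · exact i.elim0

end Workspace

open Workspace in
theorem workspace_lemma' [Fintype R] (A : Str R ar m) (q : ℕ) (hq : 0 < q) :
    ∃ B : Str R ar 0,
      (Finite A.W → Finite B.W ∧ Nat.card B.W ≤ 2 * q * Nat.card A.W) ∧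
      ∀ φ : FO R ar m 0, φ.qr ≤ q →
        (FO.SatS (sumStr A B) φ ↔ FO.SatS (sumStr (SkStr A (2 ^ q)) B) φ) := by
  refine ⟨Bstr A q, ?_, ?_⟩
  · intro hfin
    haveI := hfin
    haveI hK : Finite (SkStr A (2 ^ q)).W := by
      show Finite {w : A.W // w ∈ ballSet A (2 ^ q)}
      infer_instance
    constructor
    · show Finite ((Fin q × A.W) ⊕ (Fin q × (SkStr A (2 ^ q)).W))
      infer_instance
    · show Nat.card ((Fin q × A.W) ⊕ (Fin q × (SkStr A (2 ^ q)).W)) ≤ 2 * q * Nat.card A.W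
      have hKle : Nat.card (SkStr A (2 ^ q)).W ≤ Nat.card A.W := by
        show Nat.card {w : A.W // w ∈ ballSet A (2 ^ q)} ≤ Nat.card A.W
        exact Nat.card_le_card_of_injective _ Subtype.val_injective
      rw [Nat.card_sum, Nat.card_prod, Nat.card_prod, Nat.card_eq_fintype_card (α := Fin q),
        Fintype.card_fin]
      have h := Nat.mul_le_mul_left q hKle
      calc q * Nat.card A.W + q * Nat.card (SkStr A (2 ^ q)).W
          ≤ q * Nat.card A.W + q * Nat.card A.W := by omega
        _ = 2 * q * Nat.card A.W := by ring
  · intro φ hφ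
    exact ef_transfer (M := Mstr A q) (N := Nstr A q) (Inv A q)
      (fun n j v w hI => Inv_atomEq hI) (fun n j v w hI => Inv_atomRel hI)
      (fun n j v w hI x => Inv_forth hI x) (fun n j v w hI y => Inv_back hI y)
      φ q _ _ hφ (Inv_init hq)

/-- Workspace Lemma: given a finite relational vocabulary, a structure `(A,ā)` and
`q > 0`, there is a structure `B` — finite with `|B| ≤ 2q·|A|` whenever `A` is
finite — such that `(A + B, ā) ≡_q (A_k + B, ā)`, where `k = 2^q`, `A_k` is the
induced substructure on the Gaifman ball of radius `k` around `ā`, and `≡_q` is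
elementary equivalence up to quantifier rank `q`. -/
theorem workspace_lemma [Fintype R] (A : Str R ar m) (q : ℕ) (hq : 0 < q) :
    ∃ B : Str R ar 0,
      (Finite A.W → Finite B.W ∧ Nat.card B.W ≤ 2 * q * Nat.card A.W) ∧
      ∀ φ : FO R ar m 0, φ.qr ≤ q →
        (FO.SatS (sumStr A B) φ ↔ FO.SatS (sumStr (SkStr A (2 ^ q)) B) φ) := by
  exact workspace_lemma' A q hq
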